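/- Assume: (i) for every bounded measurable φ : 𝒳 → ℝ, ∑_{n=1}^N w̄ⁿ φ(Xⁿ) → ∫ φ dπ in L²(P) as N → ∞; (ii) g is bounded and Z > 0. Then the reweighted propagated particle estimate ∑_{n=1}^N g(Yⁿ) ψ(Yⁿ) / ∑_{n=1}^N g(Yⁿ) (defined to be 0 when the denominator vanishes) converges in L²(P) to ∫ ψ dν as N → ∞, for every measurable ψ with |ψ| ≤ M. (One time-step of Theorem 1 for the bootstrap particle filter: L² consistency propagates through sampling from the particle mixture and likelihood reweighting.) -/

import Mathlib

open MeasureTheory ProbabilityTheory Filter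
open scoped ENNReal NNReal


section Aux
variable {𝒳 : Type*} [MeasurableSpace 𝒳]

lemma aux_integrable_of_bdd {μ : Measure 𝒳} [IsFiniteMeasure μ] {f : 𝒳 → ℝ}
    (hf : Measurable f) {B : ℝ} (hB : ∀ x, |f x| ≤ B) : Integrable f μ :=
  ⟨hf.aestronglyMeasurable,
    HasFiniteIntegral.of_bounded (C := B) (Filter.Eventually.of_forall fun x => by
      simpa [Real.norm_eq_abs] using hB x)⟩

lemma aux_meas_kernel_integral (M : Kernel 𝒳 𝒳) [IsMarkovKernel M] {f : 𝒳 → ℝ}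
    (hf : Measurable f) : Measurable fun x => ∫ x', f x' ∂M x := by
  have : StronglyMeasurable (Function.uncurry fun (_ : 𝒳) (y : 𝒳) => f y) :=
    (hf.comp measurable_snd).stronglyMeasurable
  exact this.integral_kernel_prod_right.measurable

lemma aux_isProb_bind (μ : Measure 𝒳) [IsProbabilityMeasure μ] (M : Kernel 𝒳 𝒳)
    [IsMarkovKernel M] : IsProbabilityMeasure (μ.bind (fun x => M x)) := by
  constructor
  rw [Measure.bind_apply MeasurableSet.univ M.measurable.aemeasurable]
  simp

lemma aux_integral_bind_nonneg (μ : Measure 𝒳) [IsProbabilityMeasure μ] (M : Kernel 𝒳 𝒳)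
    [IsMarkovKernel M] {f : 𝒳 → ℝ} (hf : Measurable f) (h0 : ∀ x, 0 ≤ f x) {B : ℝ}
    (hB : ∀ x, f x ≤ B) :
    ∫ x, f x ∂(μ.bind (fun x => M x)) = ∫ x, ∫ x', f x' ∂M x ∂μ := by
  haveI := aux_isProb_bind μ M
  have habs : ∀ x, |f x| ≤ B := fun x => by rw [abs_of_nonneg (h0 x)]; exact hB x
  have hint : Integrable f (μ.bind (fun x => M x)) := aux_integrable_of_bdd hf habs
  have hMf_meas : Measurable fun x => ∫ x', f x' ∂M x := aux_meas_kernel_integral M hf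
  have hMf_nonneg : ∀ x, 0 ≤ ∫ x', f x' ∂M x := fun x => integral_nonneg h0
  have hMf_bdd : ∀ x, |∫ x', f x' ∂M x| ≤ B := fun x => by
    rw [abs_of_nonneg (hMf_nonneg x)]
    calc ∫ x', f x' ∂M x ≤ ∫ _x', B ∂M x :=
          integral_mono (aux_integrable_of_bdd hf habs) (integrable_const B) hB
      _ = B := by simp
  have hMf_int : Integrable (fun x => ∫ x', f x' ∂M x) μ :=
    aux_integrable_of_bdd hMf_meas hMf_bdd
  have key : ENNReal.ofReal (∫ x, f x ∂(μ.bind (fun x => M x)))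
      = ENNReal.ofReal (∫ x, ∫ x', f x' ∂M x ∂μ) := by
    rw [ofReal_integral_eq_lintegral_ofReal hint (Filter.Eventually.of_forall h0),
      ofReal_integral_eq_lintegral_ofReal hMf_int (Filter.Eventually.of_forall hMf_nonneg),
      Measure.lintegral_bind M.measurable.aemeasurable (by exact hf.ennreal_ofReal.aemeasurable)]
    refine lintegral_congr fun x => ?_
    rw [ofReal_integral_eq_lintegral_ofReal (aux_integrable_of_bdd hf habs)
      (Filter.Eventually.of_forall h0)]
  exact (ENNReal.ofReal_eq_ofReal_iff (integral_nonneg h0) (integral_nonneg hMf_nonneg)).mp key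

lemma aux_integral_bind (μ : Measure 𝒳) [IsProbabilityMeasure μ] (M : Kernel 𝒳 𝒳)
    [IsMarkovKernel M] {f : 𝒳 → ℝ} (hf : Measurable f) {B : ℝ} (hB : ∀ x, |f x| ≤ B) :
    ∫ x, f x ∂(μ.bind (fun x => M x)) = ∫ x, ∫ x', f x' ∂M x ∂μ := by
  haveI := aux_isProb_bind μ M
  have h1 : ∀ x, 0 ≤ f x + B := fun x => by have := (abs_le.mp (hB x)).1; linarith
  have h2 : ∀ x, f x + B ≤ 2 * B := fun x => by have := (abs_le.mp (hB x)).2; linarith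
  have key := aux_integral_bind_nonneg μ M (f := fun x => f x + B) (hf.add measurable_const) h1 h2
  have hint : Integrable f (μ.bind (fun x => M x)) := aux_integrable_of_bdd hf hB
  have hintM : ∀ x, Integrable f (M x) := fun x => aux_integrable_of_bdd hf hB
  have hMf_int : Integrable (fun x => ∫ x', f x' ∂M x) μ :=
    aux_integrable_of_bdd (aux_meas_kernel_integral M hf)
      (fun x => (le_trans (by simpa [Real.norm_eq_abs] using norm_integral_le_integral_norm (μ := M x) f) (by
        calc ∫ x', |f x'| ∂M x ≤ ∫ _x', B ∂M x :=
              integral_mono (hintM x).abs (integrable_const B) hB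
          _ = B := by simp)))
  rw [integral_add hint (integrable_const B), integral_const] at key
  simp only [integral_add (hintM _) (integrable_const B), integral_const, measure_univ, probReal_univ,
    ENNReal.toReal_one, one_smul, smul_eq_mul, one_mul] at key
  rw [integral_add hMf_int (integrable_const B), integral_const] at key
  simp only [measure_univ, probReal_univ, ENNReal.toReal_one, one_smul, smul_eq_mul] at key
  linarith



lemma aux_integral_pi_eval (μ : Measure 𝒳) [IsProbabilityMeasure μ] {f : 𝒳 → ℝ}
    {N : ℕ} (n : Fin N) :
    ∫ y, f (y n) ∂(Measure.pi fun _ : Fin N => μ) = ∫ x, f x ∂μ := by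
  classical
  letI : MeasureSpace 𝒳 := ⟨μ⟩
  haveI : SigmaFinite (volume : Measure 𝒳) := inferInstanceAs (SigmaFinite μ)
  have h1 : ∫ y, f (y n) ∂(Measure.pi fun _ : Fin N => μ)
      = ∫ y : Fin N → 𝒳, ∏ i, (if i = n then f (y i) else 1) := by
    refine integral_congr_ae (Filter.Eventually.of_forall fun y => ?_)
    show f (y n) = _
    exact ((Finset.prod_ite_eq' Finset.univ n fun i => f (y i)).trans (by simp)).symm
  rw [h1]
  rw [volume_pi, integral_fintype_prod_eq_prod (ι := Fin N) (f := fun i x => if i = n then f x else 1)]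
  have h2 : ∀ i : Fin N, (∫ x : 𝒳, (if i = n then f x else 1)) = if i = n then ∫ x, f x ∂μ else 1 := by
    intro i; split_ifs with h
    · rfl
    · simp
  rw [Finset.prod_congr rfl (fun i _ => h2 i), Finset.prod_ite_eq' Finset.univ n
    (fun _ => ∫ x, f x ∂μ)]
  simp

lemma aux_integral_pi_eval_pair (μ : Measure 𝒳) [IsProbabilityMeasure μ] {f : 𝒳 → ℝ}
    {N : ℕ} (n m : Fin N) (hnm : n ≠ m) :
    ∫ y, f (y n) * f (y m) ∂(Measure.pi fun _ : Fin N => μ)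
      = (∫ x, f x ∂μ) * (∫ x, f x ∂μ) := by
  classical
  letI : MeasureSpace 𝒳 := ⟨μ⟩
  haveI : SigmaFinite (volume : Measure 𝒳) := inferInstanceAs (SigmaFinite μ)
  have key : ∀ (g : Fin N → ℝ) , ∏ i, (if i = n then g i else if i = m then g i else 1)
      = g n * g m := by
    intro g
    rw [← Finset.mul_prod_erase Finset.univ _ (Finset.mem_univ n)]
    rw [← Finset.mul_prod_erase _ _
      (Finset.mem_erase.mpr ⟨hnm.symm, Finset.mem_univ m⟩)]
    rw [if_pos rfl, if_neg hnm.symm, if_pos rfl]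
    rw [Finset.prod_eq_one, mul_one]
    intro i hi
    simp only [Finset.mem_erase] at hi
    rw [if_neg hi.2.1, if_neg hi.1]
  have h1 : ∫ y, f (y n) * f (y m) ∂(Measure.pi fun _ : Fin N => μ)
      = ∫ y : Fin N → 𝒳, ∏ i, (if i = n then f (y i) else if i = m then f (y i) else 1) := by
    refine integral_congr_ae (Filter.Eventually.of_forall fun y => ?_)
    show f (y n) * f (y m) = _
    exact (key (fun i => f (y i))).symm
  rw [h1, volume_pi,
    integral_fintype_prod_eq_prod (ι := Fin N) (f := fun i x => if i = n then f x else if i = m then f x else 1)]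
  have h2 : ∀ i : Fin N, (∫ x : 𝒳, (if i = n then f x else if i = m then f x else 1))
      = if i = n then ∫ x, f x ∂μ else if i = m then ∫ x, f x ∂μ else 1 := by
    intro i; split_ifs <;> first | rfl | simp
  rw [Finset.prod_congr rfl (fun i _ => h2 i), key (fun _ => ∫ x, f x ∂μ)]


lemma aux_isProb_mix (M : Kernel 𝒳 𝒳) [IsMarkovKernel M] {N : ℕ}
    (w : Fin N → ℝ) (x : Fin N → 𝒳) (hw : ∀ n, 0 ≤ w n) (hsum : ∑ n, w n = 1) :
    IsProbabilityMeasure (∑ n : Fin N, ENNReal.ofReal (w n) • M (x n)) := by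
  constructor
  rw [Measure.finset_sum_apply]
  simp only [Measure.smul_apply, measure_univ, smul_eq_mul, mul_one]
  rw [← ENNReal.ofReal_sum_of_nonneg (fun n _ => hw n), hsum, ENNReal.ofReal_one]

lemma aux_integral_mix (M : Kernel 𝒳 𝒳) [IsMarkovKernel M] {N : ℕ}
    (w : Fin N → ℝ) (x : Fin N → 𝒳) (hw : ∀ n, 0 ≤ w n) {f : 𝒳 → ℝ}
    (hf : Measurable f) {B : ℝ} (hB : ∀ z, |f z| ≤ B) :
    ∫ z, f z ∂(∑ n : Fin N, ENNReal.ofReal (w n) • M (x n))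
      = ∑ n : Fin N, w n * ∫ z, f z ∂M (x n) := by
  rw [integral_finset_sum_measure (fun n _ =>
    (aux_integrable_of_bdd hf hB).smul_measure (by simp))]
  refine Finset.sum_congr rfl fun n _ => ?_
  rw [integral_smul_measure, ENNReal.toReal_ofReal (hw n), smul_eq_mul]

lemma aux_sq_bdd {a b : ℝ} (h : |a| ≤ b) : |a ^ 2| ≤ b ^ 2 :=
  (abs_pow a 2) ▸ pow_le_pow_left₀ (abs_nonneg a) h 2

end Aux
lemma aux_avg_bdd {N : ℕ} (hN : (0:ℝ) < N) {v : Fin N → ℝ} {B : ℝ} (hv : ∀ n, |v n| ≤ B) :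
    |(N:ℝ)⁻¹ * ∑ n, v n| ≤ B := by
  have h1 : |∑ n : Fin N, v n| ≤ (N:ℝ) * B := by
    calc |∑ n : Fin N, v n| ≤ ∑ n : Fin N, |v n| := Finset.abs_sum_le_sum_abs _ _
      _ ≤ ∑ _n : Fin N, B := Finset.sum_le_sum fun n _ => hv n
      _ = (N:ℝ) * B := by simp [Finset.sum_const, Finset.card_univ, nsmul_eq_mul]
  calc |(N:ℝ)⁻¹ * ∑ n, v n| = (N:ℝ)⁻¹ * |∑ n, v n| := by
        rw [abs_mul, abs_of_nonneg (by positivity : (0:ℝ) ≤ (N:ℝ)⁻¹)]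
    _ ≤ (N:ℝ)⁻¹ * ((N:ℝ) * B) := mul_le_mul_of_nonneg_left h1 (by positivity)
    _ = B := by field_simp

lemma aux_kernel_int_bdd {𝒳 : Type*} [MeasurableSpace 𝒳] (M : Kernel 𝒳 𝒳) [IsMarkovKernel M]
    {f : 𝒳 → ℝ} (hf : Measurable f) {B : ℝ} (hB : ∀ x, |f x| ≤ B) :
    ∀ x, |∫ x', f x' ∂M x| ≤ B := by
  intro x
  calc |∫ x', f x' ∂M x| ≤ ∫ x', |f x'| ∂M x := by
        simpa [Real.norm_eq_abs] using norm_integral_le_integral_norm (μ := M x) f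
    _ ≤ ∫ _x', B ∂M x :=
        integral_mono (aux_integrable_of_bdd hf hB).abs (integrable_const B) hB
    _ = B := by simp

lemma aux_div_bdd {Mψ sA sB : ℝ} (hM : 0 ≤ Mψ) (hsB : 0 ≤ sB) (h : |sA| ≤ Mψ * sB) :
    |sA / sB| ≤ Mψ := by
  rcases eq_or_lt_of_le hsB with h0 | h0
  · rw [← h0]; simpa using hM
  · rw [abs_div, abs_of_pos h0, div_le_iff₀ h0]
    exact h

lemma aux_ratio {Z Mψ r a sA sB nn : ℝ} (hZ : 0 < Z) (hM : 0 ≤ Mψ) (hr : |r| ≤ Mψ)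
    (hra : a = r * Z) (hn : 0 < nn) (hsB : 0 ≤ sB) (hAB : |sA| ≤ Mψ * sB) :
    (sA / sB - r) ^ 2 ≤ 2 * (2 / Z) ^ 2 * (nn⁻¹ * sA - a) ^ 2
      + 2 * (4 * Mψ / Z) ^ 2 * (nn⁻¹ * sB - Z) ^ 2 := by
  set A := nn⁻¹ * sA with hA
  set Bv := nn⁻¹ * sB with hBv
  have hinv : (0:ℝ) < nn⁻¹ := by positivity
  have hdivEq : sA / sB = A / Bv := by
    rw [hA, hBv, mul_div_mul_left _ _ (ne_of_gt hinv)]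
  have hBv0 : 0 ≤ Bv := mul_nonneg hinv.le hsB
  have hAB' : |A| ≤ Mψ * Bv := by
    rw [hA, hBv, abs_mul, abs_of_pos hinv, mul_comm Mψ, mul_assoc]
    exact mul_le_mul_of_nonneg_left (by linarith [hAB] : |sA| ≤ sB * Mψ) hinv.le
  rw [hdivEq]
  have hmain : |A / Bv - r| ≤ (2 / Z) * |A - a| + (4 * Mψ / Z) * |Bv - Z| := by
    rcases le_or_gt (Z / 2) Bv with hc | hc
    · have hBpos : 0 < Bv := by linarith
      have hrw : A / Bv - r = (A - a + r * (Z - Bv)) / Bv := by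
        field_simp
        rw [hra]; ring
      rw [hrw, abs_div, abs_of_pos hBpos]
      have hnum : |A - a + r * (Z - Bv)| ≤ |A - a| + Mψ * |Bv - Z| := by
        calc |A - a + r * (Z - Bv)| ≤ |A - a| + |r * (Z - Bv)| := abs_add_le _ _
          _ = |A - a| + |r| * |Z - Bv| := by rw [abs_mul]
          _ ≤ |A - a| + Mψ * |Bv - Z| := by
              rw [abs_sub_comm Z Bv]
              exact add_le_add_right (mul_le_mul_of_nonneg_right hr (abs_nonneg _)) _
      calc |A - a + r * (Z - Bv)| / Bv ≤ (|A - a| + Mψ * |Bv - Z|) / (Z / 2) := by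
            apply div_le_div₀ (by positivity) hnum (by linarith) hc
        _ = (2 / Z) * |A - a| + (2 / Z) * (Mψ * |Bv - Z|) := by
            field_simp
        _ ≤ (2 / Z) * |A - a| + (4 * Mψ / Z) * |Bv - Z| := by
            have hx : 0 ≤ |Bv - Z| := abs_nonneg _
            have h24 : (2 / Z) * Mψ ≤ 4 * Mψ / Z := by
              rw [div_mul_eq_mul_div, div_le_div_iff₀ hZ hZ]
              nlinarith [mul_nonneg hM hZ.le]
            have : (2 / Z) * (Mψ * |Bv - Z|) ≤ (4 * Mψ / Z) * |Bv - Z| := by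
              calc (2 / Z) * (Mψ * |Bv - Z|) = ((2 / Z) * Mψ) * |Bv - Z| := by ring
                _ ≤ (4 * Mψ / Z) * |Bv - Z| := mul_le_mul_of_nonneg_right h24 hx
            linarith
    · have habs : |Bv - Z| = Z - Bv := by rw [abs_of_nonpos (by linarith)]; ring
      have h2 : Z / 2 ≤ |Bv - Z| := by rw [habs]; linarith
      have hABv : |A / Bv| ≤ Mψ := aux_div_bdd hM hBv0 hAB'
      calc |A / Bv - r| ≤ |A / Bv| + |r| := abs_sub _ _
        _ ≤ 2 * Mψ := by linarith
        _ = (4 * Mψ / Z) * (Z / 2) := by field_simp; ring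
        _ ≤ (4 * Mψ / Z) * |Bv - Z| := by
            apply mul_le_mul_of_nonneg_left h2 (by positivity)
        _ ≤ (2 / Z) * |A - a| + (4 * Mψ / Z) * |Bv - Z| := by
            have : 0 ≤ (2 / Z) * |A - a| := by positivity
            linarith
  have hsq : (A / Bv - r) ^ 2 ≤ ((2 / Z) * |A - a| + (4 * Mψ / Z) * |Bv - Z|) ^ 2 := by
    rw [← sq_abs (A / Bv - r)]
    exact pow_le_pow_left₀ (abs_nonneg _) hmain 2
  calc (A / Bv - r) ^ 2 ≤ ((2 / Z) * |A - a| + (4 * Mψ / Z) * |Bv - Z|) ^ 2 := hsq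
    _ ≤ 2 * ((2 / Z) * |A - a|) ^ 2 + 2 * ((4 * Mψ / Z) * |Bv - Z|) ^ 2 := by
        nlinarith [sq_nonneg ((2 / Z) * |A - a| - (4 * Mψ / Z) * |Bv - Z|)]
    _ = 2 * (2 / Z) ^ 2 * (A - a) ^ 2 + 2 * (4 * Mψ / Z) ^ 2 * (Bv - Z) ^ 2 := by
        rw [mul_pow, mul_pow, sq_abs, sq_abs]; ring

lemma aux_core
    {𝒳 : Type*} [MeasurableSpace 𝒳]
    (π0 : Measure 𝒳) [IsProbabilityMeasure π0]
    (M : Kernel 𝒳 𝒳) [IsMarkovKernel M]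
    {Ω : Type*} [MeasurableSpace Ω] (P : Measure Ω) [IsProbabilityMeasure P]
    (X : (N : ℕ) → Fin N → Ω → 𝒳) (wb : (N : ℕ) → Fin N → Ω → ℝ)
    (Y : (N : ℕ) → Fin N → Ω → 𝒳)
    (hX_meas : ∀ N n, Measurable (X N n)) (hwb_meas : ∀ N n, Measurable (wb N n))
    (hY_meas : ∀ N n, Measurable (Y N n))
    (hwb_nonneg : ∀ N n ω, 0 ≤ wb N n ω)
    (hwb_sum : ∀ N : ℕ, 1 ≤ N → ∀ ω, (∑ n : Fin N, wb N n ω) = 1)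
    (hconsistent : ∀ φ : 𝒳 → ℝ, Measurable φ → (∃ B, ∀ x, |φ x| ≤ B) →
      Tendsto
        (fun N : ℕ =>
          ∫ ω, ((∑ n : Fin N, wb N n ω * φ (X N n ω)) - ∫ x, φ x ∂π0) ^ 2 ∂P)
        atTop (nhds 0))
    (𝒢 : ℕ → MeasurableSpace Ω)
    (h𝒢 : ∀ N, 𝒢 N =
      MeasurableSpace.comap (fun ω => fun n : Fin N => (X N n ω, wb N n ω)) inferInstance)
    (h𝒢_le : ∀ N, 𝒢 N ≤ ‹MeasurableSpace Ω›)
    (hcond : ∀ (N : ℕ) (F : (Fin N → 𝒳) → ℝ), Measurable F → (∃ B, ∀ y, |F y| ≤ B) →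
      (P[(fun ω => F (fun n => Y N n ω)) | 𝒢 N]) =ᵐ[P]
        (fun ω => ∫ y, F y ∂(Measure.pi (fun _ : Fin N =>
          ∑ n : Fin N, ENNReal.ofReal (wb N n ω) • (M (X N n ω))))))
    (f : 𝒳 → ℝ) (hf : Measurable f) (B : ℝ) (hB : ∀ x, |f x| ≤ B) :
    Tendsto (fun N : ℕ => ∫ ω, ((N:ℝ)⁻¹ * (∑ n : Fin N, f (Y N n ω))
        - ∫ x, ∫ x', f x' ∂M x ∂π0) ^ 2 ∂P) atTop (nhds 0) := by
  classical
  -- basic facts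
  have hMf_meas : Measurable fun x => ∫ x', f x' ∂M x := aux_meas_kernel_integral M hf
  have hMf_bdd : ∀ x, |∫ x', f x' ∂M x| ≤ B := by
    intro x
    calc |∫ x', f x' ∂M x| ≤ ∫ x', |f x'| ∂M x := by
          simpa [Real.norm_eq_abs] using norm_integral_le_integral_norm (μ := M x) f
      _ ≤ ∫ _x', B ∂M x :=
          integral_mono (aux_integrable_of_bdd hf hB).abs (integrable_const B) hB
      _ = B := by simp
  set c : ℝ := ∫ x, ∫ x', f x' ∂M x ∂π0 with hc
  have hεcons := hconsistent (fun x => ∫ x', f x' ∂M x) hMf_meas ⟨B, hMf_bdd⟩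
  -- the key per-N bound
  have key : ∀ N : ℕ, 1 ≤ N →
      ∫ ω, ((N:ℝ)⁻¹ * (∑ n : Fin N, f (Y N n ω)) - c) ^ 2 ∂P
        ≤ 2 * (B ^ 2 / N) + 2 *
          ∫ ω, ((∑ n : Fin N, wb N n ω * (∫ x', f x' ∂M (X N n ω))) - c) ^ 2 ∂P := by
    intro N hN
    haveI : SigmaFinite (P.trim (h𝒢_le N)) := inferInstance
    have hNpos : (0:ℝ) < N := by exact_mod_cast hN
    have hBnn : 0 ≤ B := by
      by_cases hne : Nonempty 𝒳
      · exact le_trans (abs_nonneg _) (hB (Classical.arbitrary 𝒳))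
      · exfalso
        rw [not_nonempty_iff] at hne
        have h1 : π0 Set.univ = 1 := measure_univ
        rw [Set.univ_eq_empty_iff.mpr hne] at h1
        simp at h1
    -- the mixture measure
    have hΛ_prob : ∀ ω : Ω, IsProbabilityMeasure
        (∑ n : Fin N, ENNReal.ofReal (wb N n ω) • M (X N n ω)) := fun ω =>
      aux_isProb_mix M _ _ (fun n => hwb_nonneg N n ω) (hwb_sum N hN ω)
    -- functions
    set F₁ : (Fin N → 𝒳) → ℝ := fun y => (N:ℝ)⁻¹ * ∑ n, f (y n) with hF₁def
    set L : Ω → ℝ := fun ω => ∑ n, wb N n ω * (∫ x', f x' ∂M (X N n ω)) with hLdef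
    set T : Ω → ℝ := fun ω => (N:ℝ)⁻¹ * ∑ n : Fin N, f (Y N n ω) with hTdef
    have hF₁_meas : Measurable F₁ :=
      (Finset.measurable_sum Finset.univ fun n _ => hf.comp (measurable_pi_apply n)).const_mul _
    have hF₁_bdd : ∀ y, |F₁ y| ≤ B := by
      intro y
      have h1 : |∑ n : Fin N, f (y n)| ≤ (N:ℝ) * B := by
        calc |∑ n : Fin N, f (y n)| ≤ ∑ n : Fin N, |f (y n)| := Finset.abs_sum_le_sum_abs _ _
          _ ≤ ∑ _n : Fin N, B := Finset.sum_le_sum fun n _ => hB _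
          _ = (N:ℝ) * B := by simp [Finset.sum_const, Finset.card_univ, nsmul_eq_mul]
      calc |F₁ y| = (N:ℝ)⁻¹ * |∑ n : Fin N, f (y n)| := by
            rw [hF₁def, abs_mul, abs_of_nonneg (by positivity : (0:ℝ) ≤ (N:ℝ)⁻¹)]
        _ ≤ (N:ℝ)⁻¹ * ((N:ℝ) * B) :=
            mul_le_mul_of_nonneg_left h1 (by positivity)
        _ = B := by field_simp
    have hT_meas : Measurable T :=
      (Finset.measurable_sum Finset.univ fun n _ => hf.comp (hY_meas N n)).const_mul _
    have hT_bdd : ∀ ω, |T ω| ≤ B := fun ω => hF₁_bdd (fun n => Y N n ω)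
    have hT_int : Integrable T P := aux_integrable_of_bdd hT_meas hT_bdd
    have hL_meas : Measurable L :=
      Finset.measurable_sum Finset.univ fun n _ =>
        (hwb_meas N n).mul (hMf_meas.comp (hX_meas N n))
    have hL_bdd : ∀ ω, |L ω| ≤ B := by
      intro ω
      calc |L ω| ≤ ∑ n : Fin N, |wb N n ω * (∫ x', f x' ∂M (X N n ω))| :=
            Finset.abs_sum_le_sum_abs _ _
        _ ≤ ∑ n : Fin N, wb N n ω * B := Finset.sum_le_sum fun n _ => by
            rw [abs_mul, abs_of_nonneg (hwb_nonneg N n ω)]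
            exact mul_le_mul_of_nonneg_left (hMf_bdd _) (hwb_nonneg N n ω)
        _ = B := by rw [← Finset.sum_mul, hwb_sum N hN ω, one_mul]
    have hL_int : Integrable L P := aux_integrable_of_bdd hL_meas hL_bdd
    have hL_sm : StronglyMeasurable[𝒢 N] L := by
      have hξ : Measurable[𝒢 N] (fun ω => fun n : Fin N => (X N n ω, wb N n ω)) := by
        rw [h𝒢 N]; exact measurable_iff_comap_le.mpr le_rfl
      have hG : Measurable (fun p : Fin N → 𝒳 × ℝ =>
          ∑ n : Fin N, (p n).2 * (∫ x', f x' ∂M (p n).1)) :=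
        Finset.measurable_sum Finset.univ fun n _ =>
          (measurable_snd.comp (measurable_pi_apply n)).mul
            (hMf_meas.comp (measurable_fst.comp (measurable_pi_apply n)))
      exact (hG.comp hξ).stronglyMeasurable
    -- conditional first moment
    have hI1 : ∀ ω : Ω, ∫ y, F₁ y ∂(Measure.pi (fun _ : Fin N =>
        ∑ n : Fin N, ENNReal.ofReal (wb N n ω) • M (X N n ω))) = L ω := by
      intro ω
      haveI := hΛ_prob ω
      rw [hF₁def]
      rw [integral_const_mul]
      rw [integral_finset_sum (μ := Measure.pi (fun _ : Fin N =>
          ∑ n : Fin N, ENNReal.ofReal (wb N n ω) • M (X N n ω)))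
        (f := fun (n : Fin N) (y : Fin N → 𝒳) => f (y n)) Finset.univ (fun n _ =>
        aux_integrable_of_bdd (hf.comp (measurable_pi_apply n)) (fun y => hB _))]
      rw [Finset.sum_congr rfl (fun n _ => aux_integral_pi_eval
        (∑ m : Fin N, ENNReal.ofReal (wb N m ω) • M (X N m ω)) (f := f) n)]
      rw [aux_integral_mix M _ _ (fun n => hwb_nonneg N n ω) hf hB]
      rw [Finset.sum_const, Finset.card_univ, Fintype.card_fin, nsmul_eq_mul]
      rw [hLdef, ← mul_assoc, inv_mul_cancel₀ hNpos.ne', one_mul]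
    have hT1 : (P[T | 𝒢 N]) =ᵐ[P] L := by
      have h0 : (fun ω => F₁ (fun n => Y N n ω)) = T := rfl
      have h1 := hcond N F₁ hF₁_meas ⟨B, hF₁_bdd⟩
      rw [h0] at h1
      exact h1.trans (Filter.Eventually.of_forall hI1)
    -- conditional second moment
    have hF₂_meas : Measurable (fun y => F₁ y ^ 2) := hF₁_meas.pow_const 2
    have hF₂_bdd : ∀ y, |F₁ y ^ 2| ≤ B ^ 2 := fun y => aux_sq_bdd (hF₁_bdd y)
    have hI2 : ∀ ω : Ω, ∫ y, F₁ y ^ 2 ∂(Measure.pi (fun _ : Fin N =>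
        ∑ n : Fin N, ENNReal.ofReal (wb N n ω) • M (X N n ω))) ≤ L ω ^ 2 + B ^ 2 / N := by
      intro ω
      haveI := hΛ_prob ω
      set Λ : Measure 𝒳 := ∑ n : Fin N, ENNReal.ofReal (wb N n ω) • M (X N n ω) with hΛdef
      set p : ℝ := ∫ z, f z * f z ∂Λ with hpdef
      set q : ℝ := ∫ z, f z ∂Λ with hqdef
      have hq : q = L ω := by
        rw [hqdef, hΛdef, aux_integral_mix M _ _ (fun n => hwb_nonneg N n ω) hf hB, hLdef]
      have hp_nonneg : 0 ≤ p := integral_nonneg fun z => mul_self_nonneg _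
      have hp_le : p ≤ B ^ 2 := by
        calc p ≤ ∫ _z, B ^ 2 ∂Λ := by
              refine integral_mono (aux_integrable_of_bdd (hf.mul hf)
                (B := B ^ 2) (fun z => ?_)) (integrable_const _) (fun z => ?_)
              · have h := hB z
                rw [abs_mul]
                calc |f z| * |f z| ≤ B * B := mul_le_mul h h (abs_nonneg _) hBnn
                  _ = B ^ 2 := by ring
              · have h := abs_le.mp (hB z)
                nlinarith [h.1, h.2]
          _ = B ^ 2 := by simp
      -- expand the square of the sum
      have hexp : ∀ y : Fin N → 𝒳, F₁ y ^ 2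
          = (N:ℝ)⁻¹ ^ 2 * ∑ n : Fin N, ∑ m : Fin N, f (y n) * f (y m) := by
        intro y
        rw [hF₁def, mul_pow, sq (∑ n : Fin N, f (y n)), Finset.sum_mul_sum]
      have hJ : ∀ n m : Fin N, ∫ y, f (y n) * f (y m) ∂(Measure.pi (fun _ : Fin N => Λ))
          = if n = m then p else q * q := by
        intro n m
        split_ifs with h
        · subst h
          exact aux_integral_pi_eval Λ (f := fun z => f z * f z) n
        · exact aux_integral_pi_eval_pair Λ n m h
      have hint_nm : ∀ n m : Fin N, Integrable (fun y : Fin N → 𝒳 => f (y n) * f (y m))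
          (Measure.pi (fun _ : Fin N => Λ)) := fun n m =>
        aux_integrable_of_bdd ((hf.comp (measurable_pi_apply n)).mul
          (hf.comp (measurable_pi_apply m))) (B := B ^ 2) (fun y => by
            rw [abs_mul]
            calc |f (y n)| * |f (y m)| ≤ B * B :=
                mul_le_mul (hB _) (hB _) (abs_nonneg _) hBnn
              _ = B ^ 2 := by ring)
      have hcalc : ∫ y, F₁ y ^ 2 ∂(Measure.pi (fun _ : Fin N => Λ))
          = (N:ℝ)⁻¹ ^ 2 * ((N:ℝ) * (p + ((N:ℝ) - 1) * (q * q))) := by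
        rw [integral_congr_ae (Filter.Eventually.of_forall hexp), integral_const_mul]
        rw [integral_finset_sum _ (fun n _ => integrable_finset_sum _ (fun m _ => hint_nm n m))]
        have hrow : ∀ n : Fin N,
            (∑ m : Fin N, ∫ y, f (y n) * f (y m) ∂(Measure.pi (fun _ : Fin N => Λ)))
              = p + ((N:ℝ) - 1) * (q * q) := by
          intro n
          rw [Finset.sum_congr rfl (fun m _ => hJ n m)]
          have hsplit : ∀ m : Fin N, (if n = m then p else q * q)
              = q * q + (if n = m then p - q * q else 0) := by
            intro m; split_ifs <;> ring
          rw [Finset.sum_congr rfl (fun m _ => hsplit m), Finset.sum_add_distrib,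
            Finset.sum_const, Finset.sum_ite_eq, if_pos (Finset.mem_univ n),
            Finset.card_univ, Fintype.card_fin, nsmul_eq_mul]
          ring
        rw [Finset.sum_congr rfl (fun m _ => integral_finset_sum _ (fun m _ => hint_nm _ m))]
        rw [Finset.sum_congr rfl (fun n _ => hrow n), Finset.sum_const, Finset.card_univ,
          Fintype.card_fin, nsmul_eq_mul]
      rw [hcalc, ← hq]
      have hu : (N:ℝ)⁻¹ * (N:ℝ) = 1 := inv_mul_cancel₀ hNpos.ne'
      have hu0 : (0:ℝ) ≤ (N:ℝ)⁻¹ := by positivity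
      have hexpand : (N:ℝ)⁻¹ ^ 2 * ((N:ℝ) * (p + ((N:ℝ) - 1) * (q * q)))
          = ((N:ℝ)⁻¹ * (N:ℝ)) * ((N:ℝ)⁻¹ * p) + ((N:ℝ)⁻¹ * (N:ℝ)) * (((N:ℝ)⁻¹ * (N:ℝ)) * (q * q))
            - ((N:ℝ)⁻¹ * (N:ℝ)) * ((N:ℝ)⁻¹ * (q * q)) := by ring
      rw [hexpand, hu]
      have h1 : (N:ℝ)⁻¹ * p ≤ (N:ℝ)⁻¹ * B ^ 2 := mul_le_mul_of_nonneg_left hp_le hu0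
      have h2 : 0 ≤ (N:ℝ)⁻¹ * (q * q) := mul_nonneg hu0 (mul_self_nonneg q)
      have h3 : B ^ 2 / (N:ℝ) = (N:ℝ)⁻¹ * B ^ 2 := by rw [div_eq_mul_inv]; ring
      rw [h3, sq q]
      linarith
    have hT2 : (P[(fun ω => T ω ^ 2) | 𝒢 N]) =ᵐ[P]
        (fun ω => ∫ y, F₁ y ^ 2 ∂(Measure.pi (fun _ : Fin N =>
          ∑ n : Fin N, ENNReal.ofReal (wb N n ω) • M (X N n ω)))) := by
      have h0 : (fun ω => F₁ (fun n => Y N n ω) ^ 2) = (fun ω => T ω ^ 2) := rfl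
      have h1 := hcond N (fun y => F₁ y ^ 2) hF₂_meas ⟨B ^ 2, hF₂_bdd⟩
      rw [h0] at h1
      exact h1
    -- integrability of squares and products
    have hT2_int : Integrable (fun ω => T ω ^ 2) P :=
      aux_integrable_of_bdd (hT_meas.pow_const 2) (fun ω => aux_sq_bdd (hT_bdd ω))
    have hL2_int : Integrable (fun ω => L ω ^ 2) P :=
      aux_integrable_of_bdd (hL_meas.pow_const 2) (fun ω => aux_sq_bdd (hL_bdd ω))
    have hLT_int : Integrable (L * T) P :=
      aux_integrable_of_bdd (hL_meas.mul hT_meas) (B := B ^ 2) (fun ω => by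
        rw [Pi.mul_apply, abs_mul]
        calc |L ω| * |T ω| ≤ B * B := mul_le_mul (hL_bdd ω) (hT_bdd ω) (abs_nonneg _) hBnn
          _ = B ^ 2 := by ring)
    -- E[T²] ≤ E[L²] + B²/N
    have eT2 : ∫ ω, T ω ^ 2 ∂P ≤ (∫ ω, L ω ^ 2 ∂P) + B ^ 2 / N := by
      have h1 : ∫ ω, T ω ^ 2 ∂P = ∫ ω, (P[(fun ω => T ω ^ 2) | 𝒢 N]) ω ∂P :=
        (integral_condExp (h𝒢_le N)).symm
      rw [h1, integral_congr_ae hT2]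
      have hint1 : Integrable (fun ω => ∫ y, F₁ y ^ 2 ∂(Measure.pi (fun _ : Fin N =>
          ∑ n : Fin N, ENNReal.ofReal (wb N n ω) • M (X N n ω)))) P :=
        (integrable_condExp (f := fun ω => T ω ^ 2) (m := 𝒢 N)).congr hT2
      have hint2 : Integrable (fun ω => L ω ^ 2 + B ^ 2 / N) P :=
        hL2_int.add (integrable_const _)
      calc ∫ ω, (∫ y, F₁ y ^ 2 ∂(Measure.pi (fun _ : Fin N =>
              ∑ n : Fin N, ENNReal.ofReal (wb N n ω) • M (X N n ω)))) ∂P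
          ≤ ∫ ω, (L ω ^ 2 + B ^ 2 / N) ∂P := integral_mono hint1 hint2 hI2
        _ = (∫ ω, L ω ^ 2 ∂P) + B ^ 2 / N := by
            rw [integral_add hL2_int (integrable_const _), integral_const]
            simp
    -- E[L·T] = E[L²]
    have eLT : ∫ ω, (L * T) ω ∂P = ∫ ω, L ω ^ 2 ∂P := by
      have hmul := condExp_mul_of_stronglyMeasurable_left hL_sm hLT_int hT_int
      have h2 : (L * P[T | 𝒢 N]) =ᵐ[P] (fun ω => L ω ^ 2) := by
        filter_upwards [hT1] with ω hω
        simp only [Pi.mul_apply, hω]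
        ring
      calc ∫ ω, (L * T) ω ∂P = ∫ ω, (P[(L * T) | 𝒢 N]) ω ∂P :=
            (integral_condExp (h𝒢_le N)).symm
        _ = ∫ ω, L ω ^ 2 ∂P := integral_congr_ae (hmul.trans h2)
    -- E[(T-L)²] ≤ B²/N
    have eTL : ∫ ω, (T ω - L ω) ^ 2 ∂P ≤ B ^ 2 / N := by
      have hdec : ∫ ω, (T ω - L ω) ^ 2 ∂P
          = (∫ ω, T ω ^ 2 ∂P) - 2 * (∫ ω, (L * T) ω ∂P) + ∫ ω, L ω ^ 2 ∂P := by
        have hptw : (fun ω => (T ω - L ω) ^ 2)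
            = fun ω => (T ω ^ 2 - 2 * (L * T) ω) + L ω ^ 2 := by
          funext ω; simp only [Pi.mul_apply]; ring
        rw [hptw, integral_add (f := fun ω => T ω ^ 2 - 2 * (L * T) ω)
          (g := fun ω => L ω ^ 2) (hT2_int.sub (hLT_int.const_mul 2)) hL2_int,
          integral_sub (f := fun ω => T ω ^ 2) (g := fun ω => 2 * (L * T) ω)
          hT2_int (hLT_int.const_mul 2), integral_const_mul]
      rw [hdec, eLT]
      linarith
    -- combine
    have hTc_int : Integrable (fun ω => (T ω - c) ^ 2) P :=
      aux_integrable_of_bdd ((hT_meas.sub measurable_const).pow_const 2)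
        (B := (B + |c|) ^ 2) (fun ω => aux_sq_bdd (by
          calc |T ω - c| ≤ |T ω| + |c| := abs_sub _ _
            _ ≤ B + |c| := add_le_add_left (hT_bdd ω) _))
    have hLc_int : Integrable (fun ω => (L ω - c) ^ 2) P :=
      aux_integrable_of_bdd ((hL_meas.sub measurable_const).pow_const 2)
        (B := (B + |c|) ^ 2) (fun ω => aux_sq_bdd (by
          calc |L ω - c| ≤ |L ω| + |c| := abs_sub _ _
            _ ≤ B + |c| := add_le_add_left (hL_bdd ω) _))
    have hTL_int : Integrable (fun ω => (T ω - L ω) ^ 2) P :=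
      aux_integrable_of_bdd ((hT_meas.sub hL_meas).pow_const 2)
        (B := (B + B) ^ 2) (fun ω => aux_sq_bdd (by
          calc |T ω - L ω| ≤ |T ω| + |L ω| := abs_sub _ _
            _ ≤ B + B := add_le_add (hT_bdd ω) (hL_bdd ω)))
    have hptw : ∀ ω, (T ω - c) ^ 2 ≤ 2 * (T ω - L ω) ^ 2 + 2 * (L ω - c) ^ 2 := by
      intro ω
      nlinarith [sq_nonneg ((T ω - L ω) - (L ω - c))]
    calc ∫ ω, (T ω - c) ^ 2 ∂P
        ≤ ∫ ω, (2 * (T ω - L ω) ^ 2 + 2 * (L ω - c) ^ 2) ∂P :=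
          integral_mono hTc_int ((hTL_int.const_mul 2).add (hLc_int.const_mul 2)) hptw
      _ = 2 * (∫ ω, (T ω - L ω) ^ 2 ∂P) + 2 * ∫ ω, (L ω - c) ^ 2 ∂P := by
          rw [integral_add (hTL_int.const_mul 2) (hLc_int.const_mul 2),
            integral_const_mul, integral_const_mul]
      _ ≤ 2 * (B ^ 2 / N) + 2 * ∫ ω, (L ω - c) ^ 2 ∂P := by
          have h0 : (0:ℝ) ≤ ∫ ω, (L ω - c) ^ 2 ∂P := integral_nonneg fun ω => sq_nonneg _
          linarith
  -- squeeze
  have h0le : ∀ N : ℕ, 0 ≤ ∫ ω, ((N:ℝ)⁻¹ * (∑ n : Fin N, f (Y N n ω)) - c) ^ 2 ∂P :=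
    fun N => integral_nonneg fun ω => sq_nonneg _
  have hlim : Tendsto (fun N : ℕ => 2 * (B ^ 2 / N) + 2 *
      ∫ ω, ((∑ n : Fin N, wb N n ω * (∫ x', f x' ∂M (X N n ω))) - c) ^ 2 ∂P)
      atTop (nhds 0) := by
    have h1 := (tendsto_const_div_atTop_nhds_zero_nat (B ^ 2)).const_mul 2
    have h2 := hεcons.const_mul 2
    simpa using h1.add h2
  exact tendsto_of_tendsto_of_tendsto_of_le_of_le' tendsto_const_nhds hlim
    (Filter.Eventually.of_forall h0le) (Filter.eventually_atTop.mpr ⟨1, key⟩)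



/-- **One time-step of Theorem 1 for the bootstrap particle filter:** if the weighted
particle system `(Xⁿ, w̄ⁿ)` is `L²`-consistent for the time-`(t−1)` filter `π`, and the
new particles `Yⁿ` are conditionally i.i.d. draws from the particle mixture
`Λ_N = ∑ₙ w̄ⁿ M(Xⁿ, ·)` given the particle system, then the likelihood-reweighted
self-normalized estimator converges in `L²(P)` to `∫ ψ dν` for the Bayes-updated
filter `ν`. -/
theorem bootstrap_step_L2_convergence
    {𝒳 : Type*} [MeasurableSpace 𝒳]
    (π0 : Measure 𝒳) [IsProbabilityMeasure π0]
    (M : Kernel 𝒳 𝒳) [IsMarkovKernel M]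
    (g : 𝒳 → ℝ) (hg_meas : Measurable g) (hg_nonneg : ∀ x, 0 ≤ g x)
    (Bg : ℝ) (hg_bdd : ∀ x, g x ≤ Bg)
    (Z : ℝ) (hZ : Z = ∫ x, ∫ x', g x' ∂(M x) ∂π0) (hZ_pos : 0 < Z)
    (ν : Measure 𝒳)
    (hν : ν = (ENNReal.ofReal Z)⁻¹ •
        ((π0.bind (fun x => M x)).withDensity (fun x => ENNReal.ofReal (g x))))
    {Ω : Type*} [MeasurableSpace Ω] (P : Measure Ω) [IsProbabilityMeasure P]
    (X : (N : ℕ) → Fin N → Ω → 𝒳) (wb : (N : ℕ) → Fin N → Ω → ℝ)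
    (Y : (N : ℕ) → Fin N → Ω → 𝒳)
    (hX_meas : ∀ N n, Measurable (X N n)) (hwb_meas : ∀ N n, Measurable (wb N n))
    (hY_meas : ∀ N n, Measurable (Y N n))
    (hwb_nonneg : ∀ N n ω, 0 ≤ wb N n ω)
    (hwb_sum : ∀ N : ℕ, 1 ≤ N → ∀ ω, (∑ n : Fin N, wb N n ω) = 1)
    -- (i)  `L²`-consistency of the weighted particles at time `t − 1`
    (hconsistent : ∀ φ : 𝒳 → ℝ, Measurable φ → (∃ B, ∀ x, |φ x| ≤ B) →
      Tendsto
        (fun N : ℕ =>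
          ∫ ω, ((∑ n : Fin N, wb N n ω * φ (X N n ω)) - ∫ x, φ x ∂π0) ^ 2 ∂P)
        atTop (nhds 0))
    -- conditional sampling structure:  given the σ-algebra `𝒢 N` generated by
    -- `(X N, wb N)`, the `Y N n` are jointly distributed as the `N`-fold product of the
    -- random mixture `Λ_N = ∑ₙ wb ⁿ • M (X ⁿ, ·)`
    (𝒢 : ℕ → MeasurableSpace Ω)
    (h𝒢 : ∀ N, 𝒢 N =
      MeasurableSpace.comap (fun ω => fun n : Fin N => (X N n ω, wb N n ω)) inferInstance)
    (h𝒢_le : ∀ N, 𝒢 N ≤ ‹MeasurableSpace Ω›)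
    (hcond : ∀ (N : ℕ) (F : (Fin N → 𝒳) → ℝ), Measurable F → (∃ B, ∀ y, |F y| ≤ B) →
      (P[(fun ω => F (fun n => Y N n ω)) | 𝒢 N]) =ᵐ[P]
        (fun ω => ∫ y, F y ∂(Measure.pi (fun _ : Fin N =>
          ∑ n : Fin N, ENNReal.ofReal (wb N n ω) • (M (X N n ω))))))
    (ψ : 𝒳 → ℝ) (hψ_meas : Measurable ψ)
    (Mψ : ℝ) (hψ_bdd : ∀ x, |ψ x| ≤ Mψ) :
    Tendsto
      (fun N : ℕ =>
        ∫ ω, ((∑ n : Fin N, g (Y N n ω) * ψ (Y N n ω)) /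
                (∑ n : Fin N, g (Y N n ω)) - ∫ x, ψ x ∂ν) ^ 2 ∂P)
      atTop (nhds 0) := by
  classical
  -- nonemptiness and sign facts
  have hXne : Nonempty 𝒳 := by
    by_contra h
    rw [not_nonempty_iff] at h
    have h1 : π0 Set.univ = 1 := measure_univ
    rw [Set.univ_eq_empty_iff.mpr h] at h1
    simp at h1
  obtain ⟨x0⟩ := hXne
  have hBg0 : 0 ≤ Bg := le_trans (hg_nonneg x0) (hg_bdd x0)
  have hMψ0 : 0 ≤ Mψ := le_trans (abs_nonneg _) (hψ_bdd x0)
  have hg_abs : ∀ x, |g x| ≤ Bg := fun x => by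
    rw [abs_of_nonneg (hg_nonneg x)]; exact hg_bdd x
  have hgψ_meas : Measurable fun x => g x * ψ x := hg_meas.mul hψ_meas
  have hgψ_abs : ∀ x, |g x * ψ x| ≤ Bg * Mψ := fun x => by
    rw [abs_mul]; exact mul_le_mul (hg_abs x) (hψ_bdd x) (abs_nonneg _) hBg0
  set a : ℝ := ∫ x, ∫ x', g x' * ψ x' ∂M x ∂π0 with ha
  haveI hbind_prob := aux_isProb_bind π0 M
  -- identify  ∫ ψ dν  with  Z⁻¹ * a
  have hr_eq : ∫ x, ψ x ∂ν = Z⁻¹ * a := by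
    rw [hν, integral_smul_measure]
    have h1 : ((ENNReal.ofReal Z)⁻¹).toReal = Z⁻¹ := by
      rw [ENNReal.toReal_inv, ENNReal.toReal_ofReal hZ_pos.le]
    rw [h1, smul_eq_mul]
    congr 1
    have h2 : ((π0.bind fun x => M x).withDensity fun x => ENNReal.ofReal (g x))
        = ((π0.bind fun x => M x).withDensity fun x =>
            ((Real.toNNReal (g x) : ℝ≥0) : ℝ≥0∞)) := rfl
    rw [h2, integral_withDensity_eq_integral_smul hg_meas.real_toNNReal ψ]
    have h3 : (fun x => Real.toNNReal (g x) • ψ x) = fun x => g x * ψ x := by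
      funext x
      rw [NNReal.smul_def, Real.coe_toNNReal _ (hg_nonneg x), smul_eq_mul]
    rw [h3, ha, aux_integral_bind π0 M hgψ_meas hgψ_abs]
  -- |Z⁻¹ * a| ≤ Mψ
  have ha_abs : |a| ≤ Mψ * Z := by
    have hinner : ∀ x, |∫ x', g x' * ψ x' ∂M x| ≤ Mψ * ∫ x', g x' ∂M x := by
      intro x
      calc |∫ x', g x' * ψ x' ∂M x| ≤ ∫ x', |g x' * ψ x'| ∂M x := by
            simpa only [Real.norm_eq_abs] using
              norm_integral_le_integral_norm (μ := M x) fun x' => g x' * ψ x'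
        _ ≤ ∫ x', Mψ * g x' ∂M x := by
            refine integral_mono (aux_integrable_of_bdd hgψ_meas hgψ_abs).abs
              ((aux_integrable_of_bdd hg_meas hg_abs).const_mul Mψ) (fun x' => ?_)
            rw [abs_mul, abs_of_nonneg (hg_nonneg x')]
            calc g x' * |ψ x'| ≤ g x' * Mψ :=
                  mul_le_mul_of_nonneg_left (hψ_bdd x') (hg_nonneg x')
              _ = Mψ * g x' := by ring
        _ = Mψ * ∫ x', g x' ∂M x := integral_const_mul Mψ _
    calc |a| ≤ ∫ x, |∫ x', g x' * ψ x' ∂M x| ∂π0 := by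
          rw [ha]
          simpa only [Real.norm_eq_abs] using norm_integral_le_integral_norm (μ := π0)
            fun x => ∫ x', g x' * ψ x' ∂M x
      _ ≤ ∫ x, Mψ * ∫ x', g x' ∂M x ∂π0 := by
          refine integral_mono ?_ ?_ hinner
          · exact (aux_integrable_of_bdd (aux_meas_kernel_integral M hgψ_meas)
              (aux_kernel_int_bdd M hgψ_meas hgψ_abs)).abs
          · exact (aux_integrable_of_bdd (aux_meas_kernel_integral M hg_meas)
              (aux_kernel_int_bdd M hg_meas hg_abs)).const_mul Mψ
      _ = Mψ * Z := by rw [integral_const_mul, ← hZ]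
  have hr_abs : |Z⁻¹ * a| ≤ Mψ := by
    rw [abs_mul, abs_of_nonneg (inv_nonneg.mpr hZ_pos.le)]
    calc Z⁻¹ * |a| ≤ Z⁻¹ * (Mψ * Z) :=
          mul_le_mul_of_nonneg_left ha_abs (inv_nonneg.mpr hZ_pos.le)
      _ = Mψ := by field_simp
  -- the two L² laws of large numbers
  have hconvA := aux_core π0 M P X wb Y hX_meas hwb_meas hY_meas hwb_nonneg hwb_sum
    hconsistent 𝒢 h𝒢 h𝒢_le hcond (fun x => g x * ψ x) hgψ_meas (Bg * Mψ) hgψ_abs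
  have hconvB := aux_core π0 M P X wb Y hX_meas hwb_meas hY_meas hwb_nonneg hwb_sum
    hconsistent 𝒢 h𝒢 h𝒢_le hcond g hg_meas Bg hg_abs
  rw [← hZ] at hconvB
  rw [← ha] at hconvA
  simp only [hr_eq]
  -- per-N comparison
  have key : ∀ N : ℕ, 1 ≤ N →
      ∫ ω, ((∑ n : Fin N, g (Y N n ω) * ψ (Y N n ω)) /
          (∑ n : Fin N, g (Y N n ω)) - Z⁻¹ * a) ^ 2 ∂P
        ≤ 2 * (2 / Z) ^ 2 *
            (∫ ω, ((N:ℝ)⁻¹ * (∑ n : Fin N, g (Y N n ω) * ψ (Y N n ω)) - a) ^ 2 ∂P)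
          + 2 * (4 * Mψ / Z) ^ 2 *
            (∫ ω, ((N:ℝ)⁻¹ * (∑ n : Fin N, g (Y N n ω)) - Z) ^ 2 ∂P) := by
    intro N hN
    have hNpos : (0:ℝ) < N := by exact_mod_cast hN
    have hsB_nonneg : ∀ ω, 0 ≤ ∑ n : Fin N, g (Y N n ω) :=
      fun ω => Finset.sum_nonneg fun n _ => hg_nonneg _
    have hAB : ∀ ω, |∑ n : Fin N, g (Y N n ω) * ψ (Y N n ω)|
        ≤ Mψ * ∑ n : Fin N, g (Y N n ω) := by
      intro ω
      calc |∑ n : Fin N, g (Y N n ω) * ψ (Y N n ω)|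
          ≤ ∑ n : Fin N, |g (Y N n ω) * ψ (Y N n ω)| := Finset.abs_sum_le_sum_abs _ _
        _ ≤ ∑ n : Fin N, Mψ * g (Y N n ω) := Finset.sum_le_sum fun n _ => by
            rw [abs_mul, abs_of_nonneg (hg_nonneg _)]
            calc g (Y N n ω) * |ψ (Y N n ω)| ≤ g (Y N n ω) * Mψ :=
                  mul_le_mul_of_nonneg_left (hψ_bdd _) (hg_nonneg _)
              _ = Mψ * g (Y N n ω) := by ring
        _ = Mψ * ∑ n : Fin N, g (Y N n ω) := by rw [Finset.mul_sum]
    have hptw : ∀ ω, ((∑ n : Fin N, g (Y N n ω) * ψ (Y N n ω)) /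
          (∑ n : Fin N, g (Y N n ω)) - Z⁻¹ * a) ^ 2
        ≤ 2 * (2 / Z) ^ 2 *
            ((N:ℝ)⁻¹ * (∑ n : Fin N, g (Y N n ω) * ψ (Y N n ω)) - a) ^ 2
          + 2 * (4 * Mψ / Z) ^ 2 *
            ((N:ℝ)⁻¹ * (∑ n : Fin N, g (Y N n ω)) - Z) ^ 2 := by
      intro ω
      refine aux_ratio hZ_pos hMψ0 hr_abs ?_ hNpos (hsB_nonneg ω) (hAB ω)
      field_simp
    -- integrability
    have hsA_meas : Measurable fun ω => ∑ n : Fin N, g (Y N n ω) * ψ (Y N n ω) :=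
      Finset.measurable_sum Finset.univ fun n _ => hgψ_meas.comp (hY_meas N n)
    have hsB_meas : Measurable fun ω => ∑ n : Fin N, g (Y N n ω) :=
      Finset.measurable_sum Finset.univ fun n _ => hg_meas.comp (hY_meas N n)
    have hLHS_int : Integrable (fun ω => ((∑ n : Fin N, g (Y N n ω) * ψ (Y N n ω)) /
        (∑ n : Fin N, g (Y N n ω)) - Z⁻¹ * a) ^ 2) P := by
      refine aux_integrable_of_bdd (((hsA_meas.div hsB_meas).sub measurable_const).pow_const 2)
        (B := (Mψ + Mψ) ^ 2) (fun ω => aux_sq_bdd ?_)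
      calc |(∑ n : Fin N, g (Y N n ω) * ψ (Y N n ω)) /
            (∑ n : Fin N, g (Y N n ω)) - Z⁻¹ * a|
          ≤ |(∑ n : Fin N, g (Y N n ω) * ψ (Y N n ω)) /
            (∑ n : Fin N, g (Y N n ω))| + |Z⁻¹ * a| := abs_sub _ _
        _ ≤ Mψ + Mψ := add_le_add (aux_div_bdd hMψ0 (hsB_nonneg ω) (hAB ω)) hr_abs
    have hA_int : Integrable (fun ω =>
        ((N:ℝ)⁻¹ * (∑ n : Fin N, g (Y N n ω) * ψ (Y N n ω)) - a) ^ 2) P := by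
      refine aux_integrable_of_bdd
        ((((Finset.measurable_sum Finset.univ fun n _ =>
            hgψ_meas.comp (hY_meas N n)).const_mul _).sub measurable_const).pow_const 2)
        (B := (Bg * Mψ + |a|) ^ 2) (fun ω => aux_sq_bdd ?_)
      calc |(N:ℝ)⁻¹ * (∑ n : Fin N, g (Y N n ω) * ψ (Y N n ω)) - a|
          ≤ |(N:ℝ)⁻¹ * (∑ n : Fin N, g (Y N n ω) * ψ (Y N n ω))| + |a| := abs_sub _ _
        _ ≤ Bg * Mψ + |a| := add_le_add_left
            (aux_avg_bdd hNpos (fun n => hgψ_abs (Y N n ω))) _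
    have hB_int : Integrable (fun ω =>
        ((N:ℝ)⁻¹ * (∑ n : Fin N, g (Y N n ω)) - Z) ^ 2) P := by
      refine aux_integrable_of_bdd
        ((((Finset.measurable_sum Finset.univ fun n _ =>
            hg_meas.comp (hY_meas N n)).const_mul _).sub measurable_const).pow_const 2)
        (B := (Bg + |Z|) ^ 2) (fun ω => aux_sq_bdd ?_)
      calc |(N:ℝ)⁻¹ * (∑ n : Fin N, g (Y N n ω)) - Z|
          ≤ |(N:ℝ)⁻¹ * (∑ n : Fin N, g (Y N n ω))| + |Z| := abs_sub _ _
        _ ≤ Bg + |Z| := add_le_add_left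
            (aux_avg_bdd hNpos (fun n => hg_abs (Y N n ω))) _
    calc ∫ ω, ((∑ n : Fin N, g (Y N n ω) * ψ (Y N n ω)) /
            (∑ n : Fin N, g (Y N n ω)) - Z⁻¹ * a) ^ 2 ∂P
        ≤ ∫ ω, (2 * (2 / Z) ^ 2 *
              ((N:ℝ)⁻¹ * (∑ n : Fin N, g (Y N n ω) * ψ (Y N n ω)) - a) ^ 2
            + 2 * (4 * Mψ / Z) ^ 2 *
              ((N:ℝ)⁻¹ * (∑ n : Fin N, g (Y N n ω)) - Z) ^ 2) ∂P :=
          integral_mono hLHS_int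
            ((hA_int.const_mul _).add (hB_int.const_mul _)) hptw
      _ = 2 * (2 / Z) ^ 2 *
            (∫ ω, ((N:ℝ)⁻¹ * (∑ n : Fin N, g (Y N n ω) * ψ (Y N n ω)) - a) ^ 2 ∂P)
          + 2 * (4 * Mψ / Z) ^ 2 *
            (∫ ω, ((N:ℝ)⁻¹ * (∑ n : Fin N, g (Y N n ω)) - Z) ^ 2 ∂P) := by
          rw [integral_add (hA_int.const_mul _) (hB_int.const_mul _),
            integral_const_mul, integral_const_mul]
  -- squeeze
  have hlim : Tendsto (fun N : ℕ =>
      2 * (2 / Z) ^ 2 *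
        (∫ ω, ((N:ℝ)⁻¹ * (∑ n : Fin N, g (Y N n ω) * ψ (Y N n ω)) - a) ^ 2 ∂P)
      + 2 * (4 * Mψ / Z) ^ 2 *
        (∫ ω, ((N:ℝ)⁻¹ * (∑ n : Fin N, g (Y N n ω)) - Z) ^ 2 ∂P)) atTop (nhds 0) := by
    simpa using (hconvA.const_mul (2 * (2 / Z) ^ 2)).add
      (hconvB.const_mul (2 * (4 * Mψ / Z) ^ 2))
  exact tendsto_of_tendsto_of_tendsto_of_le_of_le' tendsto_const_nhds hlim
    (Filter.Eventually.of_forall fun N => integral_nonneg fun ω => sq_nonneg _)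
    (Filter.eventually_atTop.mpr ⟨1, key⟩)
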